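/- Let X be a nonnegative random variable and α ∈ (0,1), q ∈ (0,1). If Y satisfies E[e^{-uY}] = E[e^{-(Γ(1-α)/α) u^α X}] for all u ≥ 0 and there exist constants c, C > 0 with c λ^{ξ(q/α)} ≤ E[X_λ^{q/α}] ≤ C λ^{ξ(q/α)} as λ → 0 for a family (X_λ) (with associated Y_λ), then E[Y_λ^q] ≍ λ^{ξ(q/α)} as λ → 0, with explicit ratio constant (Γ(1-q/α) Γ(1-α)^{q/α}) / (Γ(1-q) α^{q/α}). -/

import Mathlib

open MeasureTheory Real Set
open scoped ENNReal NNReal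

lemma auxA {a b : ℝ} (ha : 0 < a) (hb : 0 < b) :
    ∫⁻ t in Ioc (0:ℝ) b, ENNReal.ofReal (a * Real.exp (-(a * t)))
      = ENNReal.ofReal (1 - Real.exp (-(a * b))) := by
  have hcont : Continuous (fun t : ℝ => a * Real.exp (-(a * t))) := by continuity
  have h1 : ∫ t in Ioc (0:ℝ) b, a * Real.exp (-(a * t)) = 1 - Real.exp (-(a * b)) := by
    rw [← intervalIntegral.integral_of_le hb.le]
    have hder : ∀ t ∈ Set.uIcc (0:ℝ) b,
        HasDerivAt (fun t => -Real.exp (-(a * t))) (a * Real.exp (-(a * t))) t := by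
      intro t _
      have h0 : HasDerivAt (fun t : ℝ => -(a * t)) (-a) t := by
        exact HasDerivAt.neg (by simpa using (hasDerivAt_id t).const_mul a)
      have := (h0.exp).neg
      convert this using 1
      all_goals first | rfl | ring
    rw [intervalIntegral.integral_eq_sub_of_hasDerivAt hder (hcont.intervalIntegrable 0 b)]
    simp
    ring
  rw [← ofReal_integral_eq_lintegral_ofReal, h1]
  · exact hcont.integrableOn_Ioc
  · filter_upwards with t
    positivity

lemma auxB {p b : ℝ} (hp : p < -1) (hb : 0 < b) :
    ∫⁻ u in Ici b, ENNReal.ofReal (u ^ p)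
      = ENNReal.ofReal (b ^ (p + 1) / (-(p + 1))) := by
  rw [← setLIntegral_congr (Ioi_ae_eq_Ici (μ := volume) (a := b)),
    ← ofReal_integral_eq_lintegral_ofReal (integrableOn_Ioi_rpow_of_lt hp hb)]
  · rw [integral_Ioi_rpow_of_lt hp hb]
    rw [neg_div, div_neg]
  · filter_upwards [self_mem_ae_restrict measurableSet_Ioi] with u hu
    have : (0:ℝ) < u := hb.trans hu
    positivity

lemma auxC {s r : ℝ} (hs : 0 < s) (hr : 0 < r) :
    ∫⁻ t in Ioi (0:ℝ), ENNReal.ofReal (t ^ (s - 1) * Real.exp (-(r * t)))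
      = ENNReal.ofReal ((1 / r) ^ s * Real.Gamma s) := by
  have hint : IntegrableOn (fun t : ℝ => t ^ (s - 1) * Real.exp (-(r * t))) (Ioi 0) := by
    have := integrableOn_rpow_mul_exp_neg_mul_rpow (by linarith : (-1:ℝ) < s - 1)
      one_pos hr
    refine this.congr_fun (fun x hx => ?_) measurableSet_Ioi
    simp only [Real.rpow_one, neg_mul]
  rw [← ofReal_integral_eq_lintegral_ofReal hint, integral_rpow_mul_exp_neg_mul_Ioi hs hr]
  filter_upwards [self_mem_ae_restrict measurableSet_Ioi] with t ht
  have : (0:ℝ) < t := ht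
  positivity

lemma keyL {q β a : ℝ} (hq : 0 < q) (hβ : 0 < β) (hlt : q < β) (ha : 0 ≤ a) :
    ∫⁻ u in Ioi (0:ℝ), ENNReal.ofReal ((1 - Real.exp (-(a * u ^ β))) * u ^ (-1 - q))
      = ENNReal.ofReal (Real.Gamma (1 - q / β) / q * a ^ (q / β)) := by
  have hqβ : 0 < q / β := div_pos hq hβ
  have hqβ1 : q / β < 1 := (div_lt_one hβ).mpr hlt
  rcases ha.eq_or_lt with h | ha'
  · simp [← h, Real.zero_rpow hqβ.ne']
  -- a > 0 case
  set g : ℝ × ℝ → ℝ≥0∞ := fun p =>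
    if p.2 ≤ p.1 ^ β then ENNReal.ofReal (a * Real.exp (-(a * p.2)) * p.1 ^ (-1 - q)) else 0
    with hg
  have hgmeas : Measurable g := by
    apply Measurable.ite
    · exact measurableSet_le measurable_snd (by measurability)
    · measurability
    · measurability
  -- Step 1
  have step1 : ∫⁻ u in Ioi (0:ℝ), ENNReal.ofReal ((1 - Real.exp (-(a * u ^ β))) * u ^ (-1 - q))
      = ∫⁻ u in Ioi (0:ℝ), ∫⁻ t in Ioi (0:ℝ), g (u, t) := by
    refine setLIntegral_congr_fun_ae measurableSet_Ioi ?_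
    filter_upwards with u hu
    have hub : 0 < u ^ β := Real.rpow_pos_of_pos hu β
    have : ∀ t : ℝ, g (u, t)
        = (Iic (u ^ β)).indicator (fun t => ENNReal.ofReal (a * Real.exp (-(a * t)) * u ^ (-1 - q))) t := by
      intro t
      simp [hg, Set.indicator_apply, Set.mem_Iic]
    simp_rw [this]
    rw [lintegral_indicator measurableSet_Iic, Measure.restrict_restrict measurableSet_Iic,
      Set.inter_comm, Set.Ioi_inter_Iic]
    have : ∀ t : ℝ, ENNReal.ofReal (a * Real.exp (-(a * t)) * u ^ (-1 - q))
        = ENNReal.ofReal (a * Real.exp (-(a * t))) * ENNReal.ofReal (u ^ (-1 - q)) := by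
      intro t
      rw [ENNReal.ofReal_mul (by positivity)]
    simp_rw [this]
    rw [lintegral_mul_const' _ _ ENNReal.ofReal_ne_top, auxA ha' hub,
      ← ENNReal.ofReal_mul (by
        have := Real.exp_le_one_iff.mpr (by nlinarith [hub.le] : -(a * u ^ β) ≤ 0)
        linarith)]
  -- Step 2 : swap
  have step2 : ∫⁻ u in Ioi (0:ℝ), ∫⁻ t in Ioi (0:ℝ), g (u, t)
      = ∫⁻ t in Ioi (0:ℝ), ∫⁻ u in Ioi (0:ℝ), g (u, t) := by
    exact lintegral_lintegral_swap (hgmeas.aemeasurable)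
  -- Step 3 : inner integral over u
  have step3 : ∫⁻ t in Ioi (0:ℝ), ∫⁻ u in Ioi (0:ℝ), g (u, t)
      = ∫⁻ t in Ioi (0:ℝ),
          ENNReal.ofReal (t ^ ((1 - q / β) - 1) * Real.exp (-(a * t)) * (a / q)) := by
    refine setLIntegral_congr_fun_ae measurableSet_Ioi ?_
    filter_upwards with t ht
    have htβ : 0 < t ^ β⁻¹ := Real.rpow_pos_of_pos ht β⁻¹
    have hcond : ∀ u : ℝ, u ∈ Ioi (0:ℝ) → (t ≤ u ^ β ↔ t ^ β⁻¹ ≤ u) := by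
      intro u hu
      exact (Real.rpow_inv_le_iff_of_pos ht.le (le_of_lt hu) hβ).symm
    have : ∀ᵐ u ∂(volume.restrict (Ioi (0:ℝ))), g (u, t)
        = (Ici (t ^ β⁻¹)).indicator (fun u => ENNReal.ofReal (a * Real.exp (-(a * t)) * u ^ (-1 - q))) u := by
      filter_upwards [self_mem_ae_restrict measurableSet_Ioi] with u hu
      simp [hg, Set.indicator_apply, Set.mem_Ici, ← hcond u hu]
    have hsub : Ici (t ^ β⁻¹) ∩ Ioi (0:ℝ) = Ici (t ^ β⁻¹) :=
      Set.inter_eq_self_of_subset_left (fun x hx => lt_of_lt_of_le htβ hx)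
    rw [lintegral_congr_ae this, lintegral_indicator measurableSet_Ici,
      Measure.restrict_restrict measurableSet_Ici, hsub]
    have : ∀ u : ℝ, ENNReal.ofReal (a * Real.exp (-(a * t)) * u ^ (-1 - q))
        = ENNReal.ofReal (a * Real.exp (-(a * t))) * ENNReal.ofReal (u ^ (-1 - q)) := fun u =>
      ENNReal.ofReal_mul (by positivity)
    simp_rw [this]
    rw [lintegral_const_mul' _ _ ENNReal.ofReal_ne_top, auxB (by linarith : (-1 - q) < -1) htβ,
      ← ENNReal.ofReal_mul (by positivity)]
    congr 1
    have h1 : (-1 - q + 1) = -q := by ring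
    have h2 : (t ^ β⁻¹) ^ (-q) = t ^ (-(q / β)) := by
      rw [← Real.rpow_mul ht.le]
      congr 1
      field_simp
    have h3 : 1 - q / β - 1 = -(q / β) := by ring
    rw [h1, h2, h3, neg_neg]
    ring
  -- Step 4
  have step4 : ∫⁻ t in Ioi (0:ℝ),
      ENNReal.ofReal (t ^ ((1 - q / β) - 1) * Real.exp (-(a * t)) * (a / q))
      = ENNReal.ofReal ((1 / a) ^ (1 - q / β) * Real.Gamma (1 - q / β)) * ENNReal.ofReal (a / q) := by
    have hae : ∀ᵐ t ∂(volume.restrict (Ioi (0:ℝ))),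
        ENNReal.ofReal (t ^ ((1 - q / β) - 1) * Real.exp (-(a * t)) * (a / q))
          = ENNReal.ofReal (t ^ ((1 - q / β) - 1) * Real.exp (-(a * t))) * ENNReal.ofReal (a / q) := by
      filter_upwards [self_mem_ae_restrict measurableSet_Ioi] with t ht
      have ht' : (0:ℝ) < t := ht
      rw [ENNReal.ofReal_mul (by positivity)]
    rw [lintegral_congr_ae hae, lintegral_mul_const' _ _ ENNReal.ofReal_ne_top,
      auxC (by linarith : (0:ℝ) < 1 - q / β) ha']
  rw [step1, step2, step3, step4, ← ENNReal.ofReal_mul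
    (mul_nonneg (Real.rpow_nonneg (by positivity) _)
      (Real.Gamma_nonneg_of_nonneg (by linarith)))]
  congr 1
  have hs0 : a ^ (1 - q / β) ≠ 0 := (Real.rpow_pos_of_pos ha' _).ne'
  have h4 : a ^ (q / β) * a ^ (1 - q / β) = a := by
    rw [← Real.rpow_add ha']
    norm_num
  have hpow : a ^ (q / β) = a * (a ^ (1 - q / β))⁻¹ := by
    rw [eq_mul_inv_iff_mul_eq₀ hs0]
    exact h4
  rw [one_div, Real.inv_rpow ha'.le]
  rw [hpow]
  ring

theorem stmt18 {Ω : Type*} [MeasurableSpace Ω] (P : Measure Ω) [IsProbabilityMeasure P]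
    (α q : ℝ) (hα : α ∈ Set.Ioo (0:ℝ) 1) (hq : q ∈ Set.Ioo (0:ℝ) 1) (hqα : q < α)
    (X Y : ℝ → Ω → ℝ)
    (hXm : ∀ lam, Measurable (X lam)) (hYm : ∀ lam, Measurable (Y lam))
    (hXpos : ∀ lam ω, 0 ≤ X lam ω) (hYpos : ∀ lam ω, 0 ≤ Y lam ω)
    (hLap : ∀ lam : ℝ, ∀ u : ℝ, 0 ≤ u →
      ∫ ω, Real.exp (-(u * Y lam ω)) ∂P
        = ∫ ω, Real.exp (-(Real.Gamma (1 - α) / α * u ^ α * X lam ω)) ∂P)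
    (hInt : ∀ lam, Integrable (fun ω => X lam ω ^ (q / α)) P)
    (ξqα c C lam₀ : ℝ) (hc : 0 < c) (hC : 0 < C) (hlam₀ : 0 < lam₀)
    (hbound : ∀ lam ∈ Set.Ioo (0:ℝ) lam₀,
      c * lam ^ ξqα ≤ ∫ ω, X lam ω ^ (q / α) ∂P ∧
      ∫ ω, X lam ω ^ (q / α) ∂P ≤ C * lam ^ ξqα) :
    ∀ lam ∈ Set.Ioo (0:ℝ) lam₀,
      (∫ ω, Y lam ω ^ q ∂P
          = (Real.Gamma (1 - q / α) * Real.Gamma (1 - α) ^ (q / α))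
              / (Real.Gamma (1 - q) * α ^ (q / α)) * ∫ ω, X lam ω ^ (q / α) ∂P) ∧
      (Real.Gamma (1 - q / α) * Real.Gamma (1 - α) ^ (q / α))
          / (Real.Gamma (1 - q) * α ^ (q / α)) * c * lam ^ ξqα
        ≤ ∫ ω, Y lam ω ^ q ∂P ∧
      ∫ ω, Y lam ω ^ q ∂P
        ≤ (Real.Gamma (1 - q / α) * Real.Gamma (1 - α) ^ (q / α))
            / (Real.Gamma (1 - q) * α ^ (q / α)) * C * lam ^ ξqα := by
  intro lam hlam
  obtain ⟨hα0, hα1⟩ := hα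
  obtain ⟨hq0, hq1⟩ := hq
  have hY : Measurable (Y lam) := hYm lam
  have hX : Measurable (X lam) := hXm lam
  have hqα0 : 0 < q / α := div_pos hq0 hα0
  have hqα1 : q / α < 1 := (div_lt_one hα0).mpr hqα
  have hG1 : 0 < Real.Gamma (1 - q) := Real.Gamma_pos_of_pos (by linarith)
  have hG2 : 0 < Real.Gamma (1 - q / α) := Real.Gamma_pos_of_pos (by linarith)
  have hG3 : 0 < Real.Gamma (1 - α) := Real.Gamma_pos_of_pos (by linarith)
  set K : ℝ := Real.Gamma (1 - α) / α with hK
  have hK0 : 0 < K := div_pos hG3 hα0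
  set T : ℝ := Real.Gamma (1 - q / α) * Real.Gamma (1 - α) ^ (q / α)
      / (Real.Gamma (1 - q) * α ^ (q / α)) with hT
  have hT0 : 0 < T := by rw [hT]; positivity
  have hInn : 0 ≤ ∫ ω, X lam ω ^ (q / α) ∂P :=
    integral_nonneg (fun ω => Real.rpow_nonneg (hXpos lam ω) _)
  have hmain : ∫ ω, Y lam ω ^ q ∂P = T * ∫ ω, X lam ω ^ (q / α) ∂P := by
    -- step e1 : express pointwise moments via Laplace layer-cake
    have hYq : ∀ ω, ENNReal.ofReal (Y lam ω ^ q)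
        = ENNReal.ofReal (q / Real.Gamma (1 - q)) *
          ∫⁻ u in Ioi (0:ℝ),
            ENNReal.ofReal ((1 - Real.exp (-(Y lam ω * u ^ (1:ℝ)))) * u ^ (-1 - q)) := by
      intro ω
      rw [keyL hq0 one_pos hq1 (hYpos lam ω), ← ENNReal.ofReal_mul (by positivity)]
      congr 1
      field_simp
    have e1 : ∫⁻ ω, ENNReal.ofReal (Y lam ω ^ q) ∂P
        = ENNReal.ofReal (q / Real.Gamma (1 - q)) *
          ∫⁻ ω, (∫⁻ u in Ioi (0:ℝ),
            ENNReal.ofReal ((1 - Real.exp (-(Y lam ω * u ^ (1:ℝ)))) * u ^ (-1 - q))) ∂P := by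
      simp_rw [hYq]
      exact lintegral_const_mul' _ _ ENNReal.ofReal_ne_top
    have hum1 : Measurable (fun p : Ω × ℝ =>
        ENNReal.ofReal ((1 - Real.exp (-(Y lam p.1 * p.2 ^ (1:ℝ)))) * p.2 ^ (-1 - q))) :=
      Measurable.ennreal_ofReal <|
        (measurable_const.sub
          (((hY.comp measurable_fst).mul (measurable_snd.pow_const (1:ℝ))).neg.exp)).mul
          (measurable_snd.pow_const (-1 - q))
    have e2 : ∫⁻ ω, (∫⁻ u in Ioi (0:ℝ),
          ENNReal.ofReal ((1 - Real.exp (-(Y lam ω * u ^ (1:ℝ)))) * u ^ (-1 - q))) ∂P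
        = ∫⁻ u in Ioi (0:ℝ), (∫⁻ ω,
          ENNReal.ofReal ((1 - Real.exp (-(Y lam ω * u ^ (1:ℝ)))) * u ^ (-1 - q)) ∂P) :=
      lintegral_lintegral_swap hum1.aemeasurable
    have e3 : ∀ u ∈ Ioi (0:ℝ),
        (∫⁻ ω, ENNReal.ofReal ((1 - Real.exp (-(Y lam ω * u ^ (1:ℝ)))) * u ^ (-1 - q)) ∂P)
        = ∫⁻ ω, ENNReal.ofReal ((1 - Real.exp (-(K * X lam ω * u ^ α))) * u ^ (-1 - q)) ∂P := by
      intro u hu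
      have hu0 : (0:ℝ) < u := hu
      have hsplit : ∀ y : ℝ, 0 ≤ y → ENNReal.ofReal ((1 - Real.exp (-y)) * u ^ (-1 - q))
          = ENNReal.ofReal (1 - Real.exp (-y)) * ENNReal.ofReal (u ^ (-1 - q)) := by
        intro y hy
        have h1 : Real.exp (-y) ≤ 1 := Real.exp_le_one_iff.mpr (by linarith)
        exact ENNReal.ofReal_mul (by linarith)
      have lhs_eq : ∀ ω, ENNReal.ofReal ((1 - Real.exp (-(Y lam ω * u ^ (1:ℝ)))) * u ^ (-1 - q))
          = ENNReal.ofReal (1 - Real.exp (-(u * Y lam ω))) * ENNReal.ofReal (u ^ (-1 - q)) := by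
        intro ω
        rw [Real.rpow_one, mul_comm (Y lam ω) u]
        exact hsplit _ (mul_nonneg hu0.le (hYpos lam ω))
      have rhs_eq : ∀ ω, ENNReal.ofReal ((1 - Real.exp (-(K * X lam ω * u ^ α))) * u ^ (-1 - q))
          = ENNReal.ofReal (1 - Real.exp (-(K * X lam ω * u ^ α))) * ENNReal.ofReal (u ^ (-1 - q)) := by
        intro ω
        exact hsplit _ (mul_nonneg (mul_nonneg hK0.le (hXpos lam ω)) (Real.rpow_nonneg hu0.le _))
      simp_rw [lhs_eq, rhs_eq]
      rw [lintegral_mul_const' _ _ ENNReal.ofReal_ne_top,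
        lintegral_mul_const' _ _ ENNReal.ofReal_ne_top]
      congr 1
      have i1 : Integrable (fun ω => Real.exp (-(u * Y lam ω))) P := by
        refine (integrable_const (1:ℝ)).mono' ?_ ?_
        · exact (Real.measurable_exp.comp ((measurable_const.mul hY).neg)).aestronglyMeasurable
        · filter_upwards with ω
          rw [Real.norm_eq_abs, abs_of_pos (Real.exp_pos _)]
          exact Real.exp_le_one_iff.mpr (by nlinarith [hYpos lam ω])
      have i2 : Integrable (fun ω => Real.exp (-(K * X lam ω * u ^ α))) P := by
        refine (integrable_const (1:ℝ)).mono' ?_ ?_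
        · exact (Real.measurable_exp.comp
            (((measurable_const.mul hX).mul measurable_const).neg)).aestronglyMeasurable
        · filter_upwards with ω
          rw [Real.norm_eq_abs, abs_of_pos (Real.exp_pos _)]
          refine Real.exp_le_one_iff.mpr (neg_nonpos.mpr ?_)
          exact mul_nonneg (mul_nonneg hK0.le (hXpos lam ω)) (Real.rpow_nonneg hu0.le _)
      have i1' : Integrable (fun ω => 1 - Real.exp (-(u * Y lam ω))) P :=
        (integrable_const 1).sub i1
      have i2' : Integrable (fun ω => 1 - Real.exp (-(K * X lam ω * u ^ α))) P :=
        (integrable_const 1).sub i2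
      have nn1 : 0 ≤ᵐ[P] fun ω => 1 - Real.exp (-(u * Y lam ω)) := by
        filter_upwards with ω
        have : Real.exp (-(u * Y lam ω)) ≤ 1 :=
          Real.exp_le_one_iff.mpr (by nlinarith [hYpos lam ω])
        simp only [Pi.zero_apply]; linarith
      have nn2 : 0 ≤ᵐ[P] fun ω => 1 - Real.exp (-(K * X lam ω * u ^ α)) := by
        filter_upwards with ω
        have : Real.exp (-(K * X lam ω * u ^ α)) ≤ 1 :=
          Real.exp_le_one_iff.mpr (neg_nonpos.mpr
            (mul_nonneg (mul_nonneg hK0.le (hXpos lam ω)) (Real.rpow_nonneg hu0.le _)))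
        simp only [Pi.zero_apply]; linarith
      rw [← ofReal_integral_eq_lintegral_ofReal i1' nn1,
        ← ofReal_integral_eq_lintegral_ofReal i2' nn2]
      congr 1
      rw [integral_sub (integrable_const 1) i1, integral_sub (integrable_const 1) i2]
      congr 1
      rw [hLap lam u hu0.le]
      congr 1
      funext ω
      congr 1
      rw [hK]
      ring
    have hum2 : Measurable (fun p : Ω × ℝ =>
        ENNReal.ofReal ((1 - Real.exp (-(K * X lam p.1 * p.2 ^ α))) * p.2 ^ (-1 - q))) :=
      Measurable.ennreal_ofReal <|
        (measurable_const.sub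
          (((measurable_const.mul (hX.comp measurable_fst)).mul
            (measurable_snd.pow_const α)).neg.exp)).mul
          (measurable_snd.pow_const (-1 - q))
    have e4 : ∫⁻ u in Ioi (0:ℝ), (∫⁻ ω,
          ENNReal.ofReal ((1 - Real.exp (-(K * X lam ω * u ^ α))) * u ^ (-1 - q)) ∂P)
        = ∫⁻ ω, (∫⁻ u in Ioi (0:ℝ),
          ENNReal.ofReal ((1 - Real.exp (-(K * X lam ω * u ^ α))) * u ^ (-1 - q))) ∂P :=
      (lintegral_lintegral_swap hum2.aemeasurable).symm
    have e5 : ∀ ω, (∫⁻ u in Ioi (0:ℝ),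
          ENNReal.ofReal ((1 - Real.exp (-(K * X lam ω * u ^ α))) * u ^ (-1 - q)))
        = ENNReal.ofReal (Real.Gamma (1 - q / α) / q * K ^ (q / α))
            * ENNReal.ofReal (X lam ω ^ (q / α)) := by
      intro ω
      rw [keyL hq0 hα0 hqα (mul_nonneg hK0.le (hXpos lam ω))]
      rw [Real.mul_rpow hK0.le (hXpos lam ω), ← mul_assoc,
        ENNReal.ofReal_mul (by positivity)]
    have etot : ∫⁻ ω, ENNReal.ofReal (Y lam ω ^ q) ∂P
        = ENNReal.ofReal T * ENNReal.ofReal (∫ ω, X lam ω ^ (q / α) ∂P) := by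
      rw [e1, e2, setLIntegral_congr_fun_ae measurableSet_Ioi (ae_of_all _ e3), e4]
      simp_rw [e5]
      rw [lintegral_const_mul' _ _ ENNReal.ofReal_ne_top,
        ← ofReal_integral_eq_lintegral_ofReal (hInt lam)
          (ae_of_all _ fun ω => Real.rpow_nonneg (hXpos lam ω) _),
        ← mul_assoc, ← ENNReal.ofReal_mul (by positivity)]
      congr 2
      rw [hT, hK, Real.div_rpow hG3.le hα0.le]
      field_simp
    have hYqm : AEStronglyMeasurable (fun ω => Y lam ω ^ q) P :=
      (hY.pow_const q).aestronglyMeasurable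
    rw [integral_eq_lintegral_of_nonneg_ae
        (ae_of_all _ fun ω => Real.rpow_nonneg (hYpos lam ω) _) hYqm,
      etot, ← ENNReal.ofReal_mul hT0.le,
      ENNReal.toReal_ofReal (mul_nonneg hT0.le hInn)]
  obtain ⟨hb1, hb2⟩ := hbound lam hlam
  refine ⟨hmain, ?_, ?_⟩
  · rw [hmain, mul_assoc]
    exact mul_le_mul_of_nonneg_left hb1 hT0.le
  · rw [hmain, mul_assoc]
    exact mul_le_mul_of_nonneg_left hb2 hT0.le
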